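/- Let X be a measurable space. Fix K ≥ 0, a constant p₀ ∈ [0, K], and for each n ≥ 1 a measurable symmetric function pₙ : Xⁿ → ℝ with 0 ≤ pₙ ≤ K. Then for all finite measures η, ν on X: |G[η + ν] − G[η]| ≤ K · exp(η(X)) · (exp(ν(X)) − 1); in particular, G is continuous at every finite measure η along total-mass-small perturbations by positive measures. -/

import Mathlib

open MeasureTheory

section Aux

variable {X : Type*} [MeasurableSpace X]

lemma pgfm_pi_add_decomp (n : ℕ) (η ν : Measure X) [IsFiniteMeasure η] [IsFiniteMeasure ν] :
    ∃ ρ : Measure (Fin n → X), IsFiniteMeasure ρ ∧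
      Measure.pi (fun _ : Fin n => η + ν) = Measure.pi (fun _ : Fin n => η) + ρ := by
  classical
  haveI hsf : ∀ (t : Finset (Fin n)) (i : Fin n), SigmaFinite (if i ∈ t then η else ν) := by
    intro t i; split <;> infer_instance
  haveI hfm : ∀ (t : Finset (Fin n)) (i : Fin n), IsFiniteMeasure (if i ∈ t then η else ν) := by
    intro t i; split <;> infer_instance
  have key : ∀ (t : Finset (Fin n)) (s : ∀ _ : Fin n, Set X),
      Measure.pi (fun i : Fin n => if i ∈ t then η else ν) (Set.pi Set.univ s)
        = (∏ i ∈ t, η (s i)) * ∏ i ∈ Finset.univ \ t, ν (s i) := by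
    intro t s
    rw [Measure.pi_pi]
    calc ∏ i : Fin n, (if i ∈ t then η else ν) (s i)
        = ∏ i : Fin n, (if i ∈ t then η (s i) else ν (s i)) :=
          Finset.prod_congr rfl (fun i _ => by split <;> rfl)
      _ = (∏ i ∈ Finset.univ.filter (· ∈ t), η (s i)) *
            ∏ i ∈ Finset.univ.filter (fun i => ¬ i ∈ t), ν (s i) := Finset.prod_ite _ _
      _ = (∏ i ∈ t, η (s i)) * ∏ i ∈ Finset.univ \ t, ν (s i) := by
          congr 1
          · congr 1; simp [Finset.filter_mem_eq_inter]
          · congr 1; rw [Finset.sdiff_eq_filter]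
  have hdec : Measure.pi (fun _ : Fin n => η + ν) =
      ∑ t ∈ (Finset.univ : Finset (Fin n)).powerset,
        Measure.pi (fun i : Fin n => if i ∈ t then η else ν) := by
    refine Measure.pi_eq fun s hs => ?_
    rw [Measure.finset_sum_apply]
    simp_rw [key]
    rw [← Finset.prod_add]
    exact Finset.prod_congr rfl fun i _ => (Measure.add_apply η ν (s i)).symm
  refine ⟨∑ t ∈ ((Finset.univ : Finset (Fin n)).powerset).erase Finset.univ,
      Measure.pi (fun i : Fin n => if i ∈ t then η else ν), ?_, ?_⟩
  · constructor
    rw [Measure.finset_sum_apply]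
    exact ENNReal.sum_lt_top.2 fun t _ => measure_lt_top _ _
  · have hmem : (Finset.univ : Finset (Fin n)) ∈ (Finset.univ : Finset (Fin n)).powerset :=
      Finset.mem_powerset_self _
    rw [hdec, ← Finset.add_sum_erase _ _ hmem]
    congr 1
    congr 1
    funext i
    simp

lemma pgfm_pi_mass (m : ℕ) (μ : Measure X) [IsFiniteMeasure μ] :
    ((Measure.pi fun _ : Fin m => μ) Set.univ).toReal = ((μ Set.univ).toReal) ^ m := by
  rw [Measure.pi_univ, Finset.prod_const, Finset.card_univ, Fintype.card_fin, ENNReal.toReal_pow]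

lemma pgfm_int_facts {Y : Type*} [MeasurableSpace Y] (K : ℝ) (hK : 0 ≤ K)
    (q : Y → ℝ) (hm : Measurable q) (h0 : ∀ x, 0 ≤ q x) (hKq : ∀ x, q x ≤ K)
    (μ : Measure Y) [IsFiniteMeasure μ] :
    Integrable q μ ∧ 0 ≤ ∫ z, q z ∂μ ∧ ∫ z, q z ∂μ ≤ K * (μ Set.univ).toReal := by
  have hint : Integrable q μ := by
    refine ⟨hm.aestronglyMeasurable, ?_⟩
    refine MeasureTheory.HasFiniteIntegral.of_bounded (C := K) ?_
    filter_upwards with x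
    rw [Real.norm_eq_abs, abs_of_nonneg (h0 x)]; exact hKq x
  refine ⟨hint, integral_nonneg h0, ?_⟩
  calc ∫ z, q z ∂μ ≤ ∫ _, K ∂μ := integral_mono hint (integrable_const K) hKq
    _ = (μ Set.univ).toReal * K := by rw [integral_const, smul_eq_mul]; rfl
    _ = K * (μ Set.univ).toReal := mul_comm _ _

lemma pgfm_summable_succ (x : ℝ) :
    Summable (fun n : ℕ => x ^ (n + 1) / ((Nat.factorial (n + 1) : ℝ))) := by
  have h := (Real.summable_pow_div_factorial x).comp_injective (add_left_injective 1)
  exact h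

lemma pgfm_tsum_succ (x : ℝ) :
    ∑' n : ℕ, x ^ (n + 1) / ((Nat.factorial (n + 1) : ℝ)) = Real.exp x - 1 := by
  have hs : Summable fun n : ℕ => x ^ n / (Nat.factorial n : ℝ) :=
    Real.summable_pow_div_factorial x
  have hexp : Real.exp x = ∑' n : ℕ, x ^ n / (Nat.factorial n : ℝ) := by
    rw [Real.exp_eq_exp_ℝ, NormedSpace.exp_eq_tsum_div]
  have h := Summable.tsum_eq_zero_add hs
  rw [hexp, h]
  simp

end Aux

/-- Continuity bound for the PGFM `G[η] = p₀ + ∑_{n=1}^∞ (1/n!) ∫ pₙ d(η^{⊗n})`: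
`|G[η+ν] − G[η]| ≤ K exp(η(X)) (exp(ν(X)) − 1)` for all finite measures `η, ν`;
in particular `G` is continuous at every finite `η` along perturbations by positive
measures of small total mass. -/
theorem pgfm_continuity_bound {X : Type*} [MeasurableSpace X] (K p₀ : ℝ) (hK : 0 ≤ K)
    (hp₀ : p₀ ∈ Set.Icc 0 K) (p : ∀ n : ℕ, (Fin n → X) → ℝ)
    (hmeas : ∀ n, 1 ≤ n → Measurable (p n))
    (hp0 : ∀ n, 1 ≤ n → ∀ x, 0 ≤ p n x)
    (hpK : ∀ n, 1 ≤ n → ∀ x, p n x ≤ K)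
    (hsym : ∀ n, 1 ≤ n → ∀ (σ : Equiv.Perm (Fin n)) (x : Fin n → X), p n (x ∘ σ) = p n x)
    (η : Measure X) [IsFiniteMeasure η] :
    (∀ ν : Measure X, IsFiniteMeasure ν →
      |(p₀ + ∑' n : ℕ, (1 / (Nat.factorial (n + 1) : ℝ)) *
            ∫ z, p (n + 1) z ∂(Measure.pi fun _ : Fin (n + 1) => η + ν))
        - (p₀ + ∑' n : ℕ, (1 / (Nat.factorial (n + 1) : ℝ)) *
            ∫ z, p (n + 1) z ∂(Measure.pi fun _ : Fin (n + 1) => η))|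
      ≤ K * Real.exp (η Set.univ).toReal * (Real.exp (ν Set.univ).toReal - 1)) ∧
    (∀ ε : ℝ, 0 < ε → ∃ δ : ℝ, 0 < δ ∧ ∀ ν : Measure X, IsFiniteMeasure ν →
      (ν Set.univ).toReal < δ →
      |(p₀ + ∑' n : ℕ, (1 / (Nat.factorial (n + 1) : ℝ)) *
            ∫ z, p (n + 1) z ∂(Measure.pi fun _ : Fin (n + 1) => η + ν))
        - (p₀ + ∑' n : ℕ, (1 / (Nat.factorial (n + 1) : ℝ)) *
            ∫ z, p (n + 1) z ∂(Measure.pi fun _ : Fin (n + 1) => η))| < ε) := by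
  set a : ℝ := (η Set.univ).toReal with ha
  have ha0 : 0 ≤ a := ENNReal.toReal_nonneg
  have hbound : ∀ ν : Measure X, IsFiniteMeasure ν →
      |(p₀ + ∑' n : ℕ, (1 / (Nat.factorial (n + 1) : ℝ)) *
            ∫ z, p (n + 1) z ∂(Measure.pi fun _ : Fin (n + 1) => η + ν))
        - (p₀ + ∑' n : ℕ, (1 / (Nat.factorial (n + 1) : ℝ)) *
            ∫ z, p (n + 1) z ∂(Measure.pi fun _ : Fin (n + 1) => η))|
      ≤ K * Real.exp a * (Real.exp (ν Set.univ).toReal - 1) := by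
    intro ν hν
    haveI := hν
    set b : ℝ := (ν Set.univ).toReal with hb
    have hb0 : 0 ≤ b := ENNReal.toReal_nonneg
    have hab : ((η + ν) Set.univ).toReal = a + b := by
      rw [Measure.add_apply, ENNReal.toReal_add (measure_ne_top _ _) (measure_ne_top _ _)]
    set A : ℕ → ℝ := fun n => (1 / (Nat.factorial (n + 1) : ℝ)) *
        ∫ z, p (n + 1) z ∂(Measure.pi fun _ : Fin (n + 1) => η + ν) with hA
    set B : ℕ → ℝ := fun n => (1 / (Nat.factorial (n + 1) : ℝ)) *
        ∫ z, p (n + 1) z ∂(Measure.pi fun _ : Fin (n + 1) => η) with hB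
    have hone : ∀ n : ℕ, 1 ≤ n + 1 := fun n => Nat.succ_le_succ (Nat.zero_le n)
    have hfac : ∀ n : ℕ, (0 : ℝ) ≤ 1 / (Nat.factorial (n + 1) : ℝ) := fun n => by positivity
    -- per-term facts
    have hfacts : ∀ n : ℕ, 0 ≤ B n ∧ B n ≤ A n ∧
        A n ≤ K * ((a + b) ^ (n + 1) / (Nat.factorial (n + 1) : ℝ)) ∧
        A n - B n ≤ K * ((a + b) ^ (n + 1) / (Nat.factorial (n + 1) : ℝ))
            - K * (a ^ (n + 1) / (Nat.factorial (n + 1) : ℝ)) := by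
      intro n
      obtain ⟨ρ, hρfin, hρeq⟩ := pgfm_pi_add_decomp (n + 1) η ν
      haveI := hρfin
      obtain ⟨hint₂, hnn₂, hle₂⟩ := pgfm_int_facts K hK (p (n + 1)) (hmeas _ (hone n))
        (hp0 _ (hone n)) (hpK _ (hone n)) (Measure.pi fun _ : Fin (n + 1) => η)
      obtain ⟨hintρ, hnnρ, hleρ⟩ := pgfm_int_facts K hK (p (n + 1)) (hmeas _ (hone n))
        (hp0 _ (hone n)) (hpK _ (hone n)) ρ
      have hsplit : (∫ z, p (n + 1) z ∂(Measure.pi fun _ : Fin (n + 1) => η + ν))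
          = (∫ z, p (n + 1) z ∂(Measure.pi fun _ : Fin (n + 1) => η)) + ∫ z, p (n + 1) z ∂ρ := by
        rw [hρeq, integral_add_measure hint₂ hintρ]
      have hmassρ : (ρ Set.univ).toReal = (a + b) ^ (n + 1) - a ^ (n + 1) := by
        have h1 : (Measure.pi fun _ : Fin (n + 1) => η + ν) Set.univ
            = (Measure.pi fun _ : Fin (n + 1) => η) Set.univ + ρ Set.univ := by
          rw [hρeq, Measure.add_apply]
        have h2 := congrArg ENNReal.toReal h1
        rw [ENNReal.toReal_add (measure_ne_top _ _) (measure_ne_top _ _),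
          pgfm_pi_mass, pgfm_pi_mass, hab, ← ha] at h2
        linarith
      have hmass2 : ((Measure.pi fun _ : Fin (n + 1) => η) Set.univ).toReal = a ^ (n + 1) := by
        rw [pgfm_pi_mass]
      rw [hmass2] at hle₂
      rw [hmassρ] at hleρ
      have hBnn : 0 ≤ B n := mul_nonneg (hfac n) hnn₂
      have hBA : B n ≤ A n := by
        rw [hA, hB]
        refine mul_le_mul_of_nonneg_left ?_ (hfac n)
        rw [hsplit]; linarith
      constructor
      · exact hBnn
      constructor
      · exact hBA
      constructor
      · rw [hA]
        have : (∫ z, p (n + 1) z ∂(Measure.pi fun _ : Fin (n + 1) => η + ν))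
            ≤ K * (a + b) ^ (n + 1) := by rw [hsplit]; linarith
        calc (1 / (Nat.factorial (n + 1) : ℝ)) *
              ∫ z, p (n + 1) z ∂(Measure.pi fun _ : Fin (n + 1) => η + ν)
            ≤ (1 / (Nat.factorial (n + 1) : ℝ)) * (K * (a + b) ^ (n + 1)) :=
              mul_le_mul_of_nonneg_left this (hfac n)
          _ = K * ((a + b) ^ (n + 1) / (Nat.factorial (n + 1) : ℝ)) := by ring
      · have hd : A n - B n = (1 / (Nat.factorial (n + 1) : ℝ)) * ∫ z, p (n + 1) z ∂ρ := by
          rw [hA, hB]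
          simp only
          rw [hsplit]; ring
        rw [hd]
        calc (1 / (Nat.factorial (n + 1) : ℝ)) * ∫ z, p (n + 1) z ∂ρ
            ≤ (1 / (Nat.factorial (n + 1) : ℝ)) * (K * ((a + b) ^ (n + 1) - a ^ (n + 1))) :=
              mul_le_mul_of_nonneg_left hleρ (hfac n)
          _ = K * ((a + b) ^ (n + 1) / (Nat.factorial (n + 1) : ℝ))
              - K * (a ^ (n + 1) / (Nat.factorial (n + 1) : ℝ)) := by ring
    have hSab : Summable (fun n : ℕ => K * ((a + b) ^ (n + 1) / (Nat.factorial (n + 1) : ℝ))) :=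
      (pgfm_summable_succ (a + b)).mul_left K
    have hSa : Summable (fun n : ℕ => K * (a ^ (n + 1) / (Nat.factorial (n + 1) : ℝ))) :=
      (pgfm_summable_succ a).mul_left K
    have hAsum : Summable A := by
      refine Summable.of_nonneg_of_le (fun n => ?_) (fun n => (hfacts n).2.2.1) hSab
      exact le_trans (hfacts n).1 (hfacts n).2.1
    have hBsum : Summable B := by
      refine Summable.of_nonneg_of_le (fun n => (hfacts n).1)
        (fun n => le_trans (hfacts n).2.1 (hfacts n).2.2.1) ?_
      exact hSab
    have hkey : |(p₀ + ∑' n, A n) - (p₀ + ∑' n, B n)| = ∑' n, (A n - B n) := by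
      rw [add_sub_add_left_eq_sub, ← Summable.tsum_sub hAsum hBsum]
      exact abs_of_nonneg (tsum_nonneg fun n => sub_nonneg.2 (hfacts n).2.1)
    rw [hA, hB] at hkey
    rw [hkey]
    have hsum_bound : ∑' n, (A n - B n)
        ≤ ∑' n, (K * ((a + b) ^ (n + 1) / (Nat.factorial (n + 1) : ℝ))
            - K * (a ^ (n + 1) / (Nat.factorial (n + 1) : ℝ))) := by
      exact Summable.tsum_le_tsum (fun n => (hfacts n).2.2.2) (hAsum.sub hBsum) (hSab.sub hSa)
    have hval : ∑' n, (K * ((a + b) ^ (n + 1) / (Nat.factorial (n + 1) : ℝ))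
        - K * (a ^ (n + 1) / (Nat.factorial (n + 1) : ℝ)))
        = K * Real.exp a * (Real.exp b - 1) := by
      rw [Summable.tsum_sub hSab hSa, tsum_mul_left, tsum_mul_left, pgfm_tsum_succ, pgfm_tsum_succ,
        Real.exp_add]
      ring
    rw [hval] at hsum_bound
    exact hsum_bound
  refine ⟨hbound, ?_⟩
  intro ε hε
  set C : ℝ := K * Real.exp a + 1 with hC
  have hC0 : 0 < C := by positivity
  have hpos : (0 : ℝ) < 1 + ε / C := by positivity
  refine ⟨Real.log (1 + ε / C), Real.log_pos (by
    have : 0 < ε / C := div_pos hε hC0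
    linarith), ?_⟩
  intro ν hν hνδ
  haveI := hν
  refine lt_of_le_of_lt (hbound ν hν) ?_
  have hexpb : Real.exp (ν Set.univ).toReal ≤ Real.exp (Real.log (1 + ε / C)) :=
    Real.exp_le_exp.2 (le_of_lt hνδ)
  rw [Real.exp_log hpos] at hexpb
  have h1 : K * Real.exp a * (Real.exp (ν Set.univ).toReal - 1)
      ≤ K * Real.exp a * (ε / C) := by
    refine mul_le_mul_of_nonneg_left ?_ (by positivity)
    linarith
  have h2 : K * Real.exp a * (ε / C) < C * (ε / C) := by
    refine mul_lt_mul_of_pos_right ?_ (div_pos hε hC0)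
    rw [hC]; linarith
  rw [mul_div_cancel₀ ε (ne_of_gt hC0)] at h2
  linarith
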